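/- Let f : 2^P → ℝ≥0 be monotone submodular with f(∅) = 0 on a finite ground set P, and let S_k be the set produced by k steps of greedy selection (each step adding an element with maximal marginal gain). Then f(S_k) ≥ (1 − (1 − 1/k)^k) · max_{|S| ≤ k} f(S) ≥ (1 − 1/e) · max_{|S| ≤ k} f(S). -/

import Mathlib

/-- Nemhauser–Wolsey–Fisher greedy guarantee. For a monotone
submodular `f` with `f ∅ = 0`, `k` steps of greedy selection achieve at least
a `(1 − (1 − 1/k)^k) ≥ (1 − 1/e)` fraction of the optimum over sets of size at
most `k`. -/
theorem greedy_submodular_guarantee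
    {P : Type*} [Fintype P] [DecidableEq P] [Nonempty P]
    (f : Finset P → ℝ)
    (hnn : ∀ S, 0 ≤ f S)
    (hempty : f ∅ = 0)
    (hmono : ∀ A B : Finset P, A ⊆ B → f A ≤ f B)
    (hsub : ∀ A B : Finset P, A ⊆ B → ∀ p : P, p ∉ B →
      f (insert p B) - f B ≤ f (insert p A) - f A)
    (k : ℕ) (hk : 1 ≤ k)
    (s : ℕ → Finset P)
    (hs0 : s 0 = ∅)
    (hgreedy : ∀ i < k, ∃ p : P,
      s (i + 1) = insert p (s i) ∧
      ∀ q : P, f (insert q (s i)) - f (s i) ≤ f (insert p (s i)) - f (s i)) :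
    ∀ S : Finset P, S.card ≤ k →
      (1 - (1 - 1 / (k : ℝ)) ^ k) * f S ≤ f (s k) ∧
      (1 - 1 / Real.exp 1) * f S ≤ f (s k) := by
  intro S hS
  have hk0 : (0:ℝ) < (k:ℝ) := by exact_mod_cast hk
  set r : ℝ := 1 - 1/(k:ℝ) with hr
  have hr0 : 0 ≤ r := by
    have : 1/(k:ℝ) ≤ 1 := by
      rw [div_le_one hk0]; exact_mod_cast hk
    simp only [hr]; linarith
  -- key submodularity lemma
  have key : ∀ (A T : Finset P), f (A ∪ T) ≤ f T + ∑ p ∈ A, (f (insert p T) - f T) := by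
    intro A T
    induction A using Finset.induction_on with
    | empty => simp
    | @insert a A' ha ih =>
      rw [Finset.sum_insert ha, Finset.insert_union]
      by_cases h : a ∈ A' ∪ T
      · have haT : a ∈ T := by
          rcases Finset.mem_union.1 h with h1 | h1
          · exact absurd h1 ha
          · exact h1
        rw [Finset.insert_eq_self.2 h, Finset.insert_eq_self.2 haT]
        linarith [ih]
      · have h2 := hsub T (A' ∪ T) Finset.subset_union_right a h
        linarith [ih]
  have main : ∀ i ≤ k, f S - f (s i) ≤ r ^ i * f S := by
    intro i hi
    induction i with
    | zero => simp [hs0, hempty]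
    | succ i ih =>
      have hik : i < k := hi
      obtain ⟨p, hp_eq, hp_max⟩ := hgreedy i hik
      have ihi := ih (le_of_lt hik)
      have hδ0 : 0 ≤ f (s (i+1)) - f (s i) := by
        obtain ⟨q⟩ := ‹Nonempty P›
        have h1 := hp_max q
        have h2 : f (s i) ≤ f (insert q (s i)) :=
          hmono _ _ (Finset.subset_insert _ _)
        rw [hp_eq]; linarith
      have hSbound : f S ≤ f (s i) + (k:ℝ) * (f (s (i+1)) - f (s i)) := by
        have h1 : f S ≤ f (S ∪ s i) := hmono _ _ Finset.subset_union_left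
        have h2 := key S (s i)
        have h3 : ∑ q ∈ S, (f (insert q (s i)) - f (s i))
            ≤ (S.card : ℝ) * (f (s (i+1)) - f (s i)) := by
          rw [hp_eq]
          calc ∑ q ∈ S, (f (insert q (s i)) - f (s i))
              ≤ ∑ _q ∈ S, (f (insert p (s i)) - f (s i)) :=
                Finset.sum_le_sum (fun q _ => hp_max q)
            _ = (S.card : ℝ) * (f (insert p (s i)) - f (s i)) := by
                rw [Finset.sum_const, nsmul_eq_mul]
        have h4 : (S.card : ℝ) * (f (s (i+1)) - f (s i))
            ≤ (k:ℝ) * (f (s (i+1)) - f (s i)) := by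
          apply mul_le_mul_of_nonneg_right _ hδ0
          exact_mod_cast hS
        linarith
      have h5 : (f S - f (s i)) / (k:ℝ) ≤ f (s (i+1)) - f (s i) :=
        (div_le_iff₀ hk0).2 (by linarith)
      have h6 : r * (f S - f (s i)) = (f S - f (s i)) - (f S - f (s i)) / (k:ℝ) := by
        rw [hr]; ring
      have step : f S - f (s (i+1)) ≤ r * (f S - f (s i)) := by rw [h6]; linarith
      calc f S - f (s (i+1)) ≤ r * (f S - f (s i)) := step
        _ ≤ r * (r ^ i * f S) := mul_le_mul_of_nonneg_left ihi hr0
        _ = r ^ (i+1) * f S := by ring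
  have hmain := main k le_rfl
  have h1 : (1 - r ^ k) * f S = f S - r ^ k * f S := by ring
  have hgoal1 : (1 - r ^ k) * f S ≤ f (s k) := by linarith
  refine ⟨hgoal1, ?_⟩
  have hexp : r ≤ Real.exp (-(1/(k:ℝ))) := by
    have := Real.add_one_le_exp (-(1/(k:ℝ)))
    simp only [hr]; linarith
  have hpow : r ^ k ≤ Real.exp (-(1/(k:ℝ))) ^ k := pow_le_pow_left₀ hr0 hexp k
  have hkne : (k:ℝ) ≠ 0 := ne_of_gt hk0
  have hexpk : Real.exp (-(1/(k:ℝ))) ^ k = 1 / Real.exp 1 := by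
    rw [← Real.exp_nat_mul]
    have : (k:ℝ) * (-(1/(k:ℝ))) = -1 := by field_simp
    rw [this, Real.exp_neg, one_div]
  have h2 : r ^ k ≤ 1 / Real.exp 1 := by rw [← hexpk]; exact hpow
  have h3 : (1 - 1 / Real.exp 1) * f S ≤ (1 - r ^ k) * f S :=
    mul_le_mul_of_nonneg_right (by linarith) (hnn S)
  linarith
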